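/- Let p(z) = z^n + a_{n-1}z^{n-1} + ... + a_0 be a monic complex polynomial factoring as ∏_{i=1}^r (z - λ_i)^{m_i} with distinct roots λ_i. For any δ with 0 < δ < (1/2)·min_{i≠j}|λ_i - λ_j|, there exists ε > 0 such that every monic polynomial q(z) = z^n + b_{n-1}z^{n-1} + ... + b_0 with max_k |a_k - b_k| < ε has exactly m_i roots counted with multiplicity in the open disk of radius δ around λ_i, for each i. -/

import Mathlib

open Polynomial Filter

lemma list_roots {n : ℕ} {q : Polynomial ℂ} (hq : q.Monic) (hd : q.natDegree = n) :
    ∃ f : Fin n → ℂ, q.roots = Multiset.map f ↑(List.finRange n) ∧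
      ∀ z : ℂ, q.eval z = ∏ j : Fin n, (z - f j) := by
  have hs : Multiset.card q.roots = n := by
    rw [← hd]; exact (splits_iff_card_roots).mp (IsAlgClosed.splits q)
  have hl : q.roots.toList.length = n := by simp [hs]
  set f : Fin n → ℂ := fun j => q.roots.toList.get (Fin.cast hl.symm j) with hf
  have hofn : List.ofFn f = q.roots.toList := by
    apply List.ext_get (by simp [hl])
    intro i h1 h2
    simp [f, List.get_ofFn]
  have hroots : q.roots = Multiset.map f ↑(List.finRange n) := by
    rw [Multiset.map_coe, ← List.ofFn_eq_map, hofn, Multiset.coe_toList]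
  refine ⟨f, hroots, fun z => ?_⟩
  conv_lhs => rw [(IsAlgClosed.splits q).eq_prod_roots_of_monic hq]
  rw [eval_multiset_prod, hroots, Multiset.map_map, Multiset.map_map]
  rw [show (Finset.univ : Finset (Fin n)).prod (fun j => z - f j)
      = (Multiset.map (fun j => z - f j) (Finset.univ : Finset (Fin n)).val).prod from rfl]
  rw [Fin.univ_def]
  congr 1
  apply Multiset.map_congr rfl
  intro j _
  simp

lemma root_bound {q : Polynomial ℂ} (hq : q.Monic) {z : ℂ} (hz : q.eval z = 0) :
    ‖z‖ ≤ max 1 (∑ t ∈ Finset.range q.natDegree, ‖q.coeff t‖) := by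
  by_contra h
  push_neg at h
  obtain ⟨h1, hB⟩ := max_lt_iff.mp h
  set n := q.natDegree with hn
  set B := ∑ t ∈ Finset.range n, ‖q.coeff t‖ with hBdef
  have hn1 : 1 ≤ n := by
    rcases Nat.eq_zero_or_pos n with h0 | h; swap; · exact h
    exfalso
    have : q = 1 := hq.natDegree_eq_zero.mp h0
    simp [this] at hz
  have hzpos : (0:ℝ) < ‖z‖ := lt_trans one_pos h1
  have key : ‖z‖ ^ n = ‖∑ t ∈ Finset.range n, q.coeff t * z ^ t‖ := by
    have := eval_eq_sum_range (p := q) z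
    rw [hz, Finset.sum_range_succ, ← hn, hq.coeff_natDegree, one_mul] at this
    have hzn : z ^ n = -∑ t ∈ Finset.range n, q.coeff t * z ^ t := by linear_combination -this
    rw [← norm_pow, hzn, norm_neg]
  have hle : ‖z‖ ^ n ≤ B * ‖z‖ ^ (n - 1) := by
    rw [key]
    calc ‖∑ t ∈ Finset.range n, q.coeff t * z ^ t‖
        ≤ ∑ t ∈ Finset.range n, ‖q.coeff t * z ^ t‖ := by
          exact norm_sum_le _ _
      _ ≤ ∑ t ∈ Finset.range n, ‖q.coeff t‖ * ‖z‖ ^ (n-1) := by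
          apply Finset.sum_le_sum
          intro t ht
          rw [norm_mul, norm_pow]
          apply mul_le_mul_of_nonneg_left _ (norm_nonneg _)
          exact pow_le_pow_right₀ h1.le (Nat.le_sub_one_of_lt (Finset.mem_range.mp ht))
      _ = B * ‖z‖ ^ (n-1) := by rw [← Finset.sum_mul]
  have hlt : B * ‖z‖ ^ (n-1) < ‖z‖ ^ n := by
    have : ‖z‖ ^ n = ‖z‖ * ‖z‖ ^ (n-1) := by
      rw [← pow_succ']
      congr 1
      omega
    rw [this]
    exact mul_lt_mul_of_pos_right hB (pow_pos hzpos _)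
  linarith

lemma count_roots_p {r : ℕ} (lam : Fin r → ℂ) (hlam : Function.Injective lam)
    (m : Fin r → ℕ) (i : Fin r) :
    Multiset.count (lam i) (∏ j : Fin r, (X - C (lam j)) ^ m j).roots = m i := by
  classical
  have hne : (∏ j : Fin r, (X - C (lam j)) ^ m j) ≠ 0 :=
    (monic_prod_of_monic _ _ fun j _ => (monic_X_sub_C _).pow _).ne_zero
  rw [roots_prod _ _ hne]
  simp only [roots_pow, roots_X_sub_C]
  rw [Multiset.count_bind]
  have : Multiset.map (fun j => Multiset.count (lam i) (m j • ({lam j} : Multiset ℂ)))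
      (Finset.univ : Finset (Fin r)).val
      = Multiset.map (fun j => if j = i then m j else 0) (Finset.univ : Finset (Fin r)).val := by
    apply Multiset.map_congr rfl
    intro j _
    rw [Multiset.count_nsmul, Multiset.count_singleton]
    by_cases h : j = i
    · subst h; simp
    · have : lam i ≠ lam j := fun he => h (hlam he.symm)
      simp [this, h]
  rw [this]
  rw [show (Multiset.map (fun j => if j = i then m j else 0) (Finset.univ : Finset (Fin r)).val).sum
      = ∑ j : Fin r, (if j = i then m j else 0) from rfl]
  simp



open Polynomial in
open scoped Classical in
/-- Continuous dependence of roots (via Rouché): if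
`p = ∏ᵢ (z - λᵢ)^{mᵢ}` has distinct roots `λᵢ` and `0 < δ < (1/2) minᵢ≠ⱼ |λᵢ - λⱼ|`,
then there is `ε > 0` such that every monic polynomial `q` of degree `n` whose
coefficients are within `ε` of those of `p` has exactly `mᵢ` roots (with
multiplicity) in the open disk of radius `δ` around `λᵢ`, for each `i`. -/
theorem stmt2 (n r : ℕ) (hn : 0 < n) (lam : Fin r → ℂ)
    (hlam : Function.Injective lam) (m : Fin r → ℕ) (hm : ∑ i, m i = n)
    (δ : ℝ) (hδ0 : 0 < δ)
    (hδ : ∀ i j : Fin r, i ≠ j → 2 * δ < ‖lam i - lam j‖) :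
    ∃ ε > 0, ∀ q : Polynomial ℂ, q.Monic → q.natDegree = n →
      (∀ k < n,
        ‖(∏ i : Fin r, (X - C (lam i)) ^ m i).coeff k - q.coeff k‖ < ε) →
      ∀ i : Fin r,
        (q.roots.filter (fun z => ‖z - lam i‖ < δ)).card = m i := by
  set p := ∏ i : Fin r, (X - C (lam i)) ^ m i with hp
  have hpmonic : p.Monic := monic_prod_of_monic _ _ fun i _ => (monic_X_sub_C _).pow _
  have hpdeg : p.natDegree = n := by
    rw [hp, natDegree_prod _ _ (fun i _ => ((monic_X_sub_C (lam i)).pow _).ne_zero)]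
    simp [natDegree_pow, natDegree_X_sub_C, hm]
  by_contra hcon
  push_neg at hcon
  choose Q hQm hQd hQc hQi hQbad using fun k : ℕ =>
    hcon (1/((k:ℝ)+1)) (by positivity)
  choose F hF hFeval using fun k : ℕ => list_roots (hQm k) (hQd k)
  -- roots are bounded
  set B := max 1 (∑ t ∈ Finset.range n, (‖p.coeff t‖ + 1)) with hB
  have hBnn : (0:ℝ) ≤ B := le_trans zero_le_one (le_max_left _ _)
  have hFroot : ∀ k j, (Q k).eval (F k j) = 0 := by
    intro k j
    rw [hFeval k]
    exact Finset.prod_eq_zero (Finset.mem_univ j) (sub_self _)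
  have hFbound : ∀ k j, ‖F k j‖ ≤ B := by
    intro k j
    refine le_trans (root_bound (hQm k) (hFroot k j)) ?_
    apply max_le_max le_rfl
    rw [hQd k]
    apply Finset.sum_le_sum
    intro t ht
    have h1 : ‖p.coeff t - (Q k).coeff t‖ < 1/((k:ℝ)+1) :=
      hQc k t (Finset.mem_range.mp ht)
    have h2 : (1:ℝ)/((k:ℝ)+1) ≤ 1 := by
      rw [div_le_one (by positivity)]; linarith [Nat.cast_nonneg (α := ℝ) k]
    calc ‖(Q k).coeff t‖
        = ‖p.coeff t - (p.coeff t - (Q k).coeff t)‖ := by congr 1; ring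
      _ ≤ ‖p.coeff t‖ + ‖p.coeff t - (Q k).coeff t‖ := by
          simpa using norm_sub_le (p.coeff t) (p.coeff t - (Q k).coeff t)
      _ ≤ ‖p.coeff t‖ + 1 := by linarith
  have hmem : ∀ k, F k ∈ Metric.closedBall (0 : Fin n → ℂ) B := by
    intro k
    rw [Metric.mem_closedBall, dist_pi_le_iff hBnn]
    intro j
    simp only [Pi.zero_apply, Complex.dist_eq, sub_zero]
    exact hFbound k j
  obtain ⟨g, -, φ, hφ, hg⟩ :=
    tendsto_subseq_of_bounded Metric.isBounded_closedBall hmem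
  have hgj : ∀ j, Tendsto (fun k => F (φ k) j) atTop (nhds (g j)) :=
    fun j => tendsto_pi_nhds.mp hg j
  -- coefficients converge
  have hcoeff : ∀ t, Tendsto (fun k => (Q (φ k)).coeff t) atTop (nhds (p.coeff t)) := by
    intro t
    rcases lt_trichotomy t n with h | h | h
    · rw [tendsto_iff_dist_tendsto_zero]
      refine squeeze_zero (g := fun k : ℕ => 1/((k:ℝ)+1)) (fun k => dist_nonneg)
        (fun k => ?_) tendsto_one_div_add_atTop_nhds_zero_nat
      · have h1 : ‖p.coeff t - (Q (φ k)).coeff t‖ < 1/((φ k:ℝ)+1) :=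
          hQc (φ k) t h
        have h2 : (1:ℝ)/((φ k:ℝ)+1) ≤ 1/((k:ℝ)+1) := by
          have h3 : (k:ℝ) ≤ (φ k : ℝ) := Nat.cast_le.mpr hφ.le_apply
          apply div_le_div_of_nonneg_left one_pos.le (by positivity)
          linarith
        rw [Complex.dist_eq]
        calc ‖(Q (φ k)).coeff t - p.coeff t‖
            = ‖p.coeff t - (Q (φ k)).coeff t‖ := by
              rw [← norm_neg]; congr 1; ring
          _ ≤ 1/((k:ℝ)+1) := le_trans h1.le h2
    · subst h
      have : ∀ k, (Q (φ k)).coeff t = 1 := by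
        intro k
        have := (hQm (φ k)).coeff_natDegree
        rwa [hQd (φ k)] at this
      simp only [this]
      have hpc : p.coeff t = 1 := by
        have := hpmonic.coeff_natDegree
        rwa [hpdeg] at this
      rw [hpc]
      exact tendsto_const_nhds
    · have : ∀ k, (Q (φ k)).coeff t = 0 := by
        intro k
        exact coeff_eq_zero_of_natDegree_lt (by rw [hQd (φ k)]; exact h)
      simp only [this]
      rw [coeff_eq_zero_of_natDegree_lt (by rw [hpdeg]; exact h)]
      exact tendsto_const_nhds
  -- the limit polynomial equals p
  have heval : ∀ z : ℂ, p.eval z = ∏ j : Fin n, (z - g j) := by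
    intro z
    have h1 : Tendsto (fun k => (Q (φ k)).eval z) atTop (nhds (p.eval z)) := by
      have hrw : ∀ k, (Q (φ k)).eval z = ∑ t ∈ Finset.range (n+1), (Q (φ k)).coeff t * z ^ t := by
        intro k
        rw [eval_eq_sum_range, hQd (φ k)]
      have hrwp : p.eval z = ∑ t ∈ Finset.range (n+1), p.coeff t * z ^ t := by
        rw [eval_eq_sum_range, hpdeg]
      simp only [hrw]
      rw [hrwp]
      exact tendsto_finset_sum _ fun t _ => (hcoeff t).mul tendsto_const_nhds
    have h2 : Tendsto (fun k => (Q (φ k)).eval z) atTop (nhds (∏ j : Fin n, (z - g j))) := by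
      have hrw : ∀ k, (Q (φ k)).eval z = ∏ j : Fin n, (z - F (φ k) j) := fun k => hFeval (φ k) z
      simp only [hrw]
      exact tendsto_finset_prod _ fun j _ => tendsto_const_nhds.sub (hgj j)
    exact tendsto_nhds_unique h1 h2
  have hPp : (∏ j : Fin n, (X - C (g j))) = p := by
    apply Polynomial.funext
    intro z
    rw [eval_prod, heval z]
    apply Finset.prod_congr rfl
    intro j _
    simp
  have hProots : Multiset.map g ↑(List.finRange n) = p.roots := by
    rw [← hPp]
    rw [show (∏ j : Fin n, (X - C (g j)))
        = (Multiset.map (fun a => X - C a) (Multiset.map g ↑(List.finRange n))).prod from ?_,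
      roots_multiset_prod_X_sub_C]
    rw [Multiset.map_map]
    rw [show (Finset.univ : Finset (Fin n)).prod (fun j => X - C (g j))
        = (Multiset.map (fun j => X - C (g j)) (Finset.univ : Finset (Fin n)).val).prod from rfl]
    rw [Fin.univ_def]
    rfl
  -- every g j is some lam i
  have hglam : ∀ j : Fin n, ∃ i : Fin r, g j = lam i := by
    intro j
    have hgmem : g j ∈ p.roots := by
      rw [← hProots]
      exact Multiset.mem_map_of_mem g (by simp [List.mem_finRange])
    rw [mem_roots hpmonic.ne_zero] at hgmem
    rw [IsRoot, hp] at hgmem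
    simp only [eval_prod, eval_pow, eval_sub, eval_X, eval_C] at hgmem
    obtain ⟨i, -, hi⟩ := Finset.prod_eq_zero_iff.mp hgmem
    obtain ⟨hi0, -⟩ := pow_eq_zero_iff'.mp hi
    exact ⟨i, by linear_combination hi0⟩
  -- eventually roots are δ-close to g
  have hev : ∀ᶠ k in atTop, ∀ j : Fin n, ‖F (φ k) j - g j‖ < δ := by
    rw [eventually_all]
    intro j
    have := Metric.tendsto_nhds.mp (hgj j) δ hδ0
    filter_upwards [this] with k hk
    rwa [Complex.dist_eq] at hk
  obtain ⟨k, hk⟩ := hev.exists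
  -- derive contradiction
  apply hQbad (φ k)
  set i := hQi (φ k) with hidef
  rw [hF (φ k)]
  have hcount : ((Multiset.map (F (φ k)) ↑(List.finRange n)).filter
      (fun z => ‖z - lam i‖ < δ)).card
      = ((↑(List.finRange n) : Multiset (Fin n)).filter
        (fun j => ‖F (φ k) j - lam i‖ < δ)).card := by
    rw [Multiset.filter_map, Multiset.card_map]
    rfl
  rw [hcount]
  have hiff : ∀ j : Fin n, (‖F (φ k) j - lam i‖ < δ) ↔ lam i = g j := by
    intro j
    obtain ⟨i', hi'⟩ := hglam j
    by_cases hii : i' = i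
    · subst hii
      constructor
      · intro _; exact hi'.symm
      · intro _
        have := hk j
        rwa [hi'] at this
    · constructor
      · intro habs
        exfalso
        have h1 : ‖F (φ k) j - lam i'‖ < δ := by
          have := hk j; rwa [hi'] at this
        have h2 : 2 * δ < ‖lam i' - lam i‖ := hδ i' i hii
        have h3 : ‖lam i' - lam i‖ ≤
            ‖F (φ k) j - lam i'‖ + ‖F (φ k) j - lam i‖ := by
          calc ‖lam i' - lam i‖
              = ‖(F (φ k) j - lam i) - (F (φ k) j - lam i')‖ := by congr 1; ring
            _ ≤ ‖F (φ k) j - lam i‖ + ‖F (φ k) j - lam i'‖ := by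
                simpa using
                  norm_sub_le (F (φ k) j - lam i) (F (φ k) j - lam i')
            _ = _ := by ring
        linarith
      · intro he
        exfalso
        rw [hi'] at he
        exact hii (hlam he.symm)
  have hfc : ((↑(List.finRange n) : Multiset (Fin n)).filter
      (fun j => ‖F (φ k) j - lam i‖ < δ))
      = ((↑(List.finRange n) : Multiset (Fin n)).filter (fun j => lam i = g j)) := by
    apply Multiset.filter_congr
    intro j _
    exact hiff j
  rw [hfc, ← Multiset.count_map, hProots]
  rw [hp]
  exact count_roots_p lam hlam m i
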